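/- Let H be an inner product space, z_1, …, z_n ∈ H with ⟨z_i, z_i⟩ = C > 0 for all i, and z̄ = (1/n) Σ_i z_i. For an index set I ⊆ [n], let S_I = span{z_i : i ∈ I}, let z_I = P_{S_I} z̄ be the orthogonal projection of z̄ onto S_I, and define the incoherence ν_I = min_{j ∉ I} max_{i ∈ I} ⟨z_i, z_j⟩. Then ‖z̄ − z_I‖ ≤ (1 − |I|/n) · sqrt((C² − ν_I²)/C). -/

import Mathlib

open RealInnerProductSpace Finset

/-- Incoherence-based sparse approximation bound for the sample mean:
`‖z̄ − z_I‖ ≤ (1 − |I|/n) · sqrt((C² − ν_I²)/C)`. -/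
theorem incoherence_bound
    {H : Type*} [NormedAddCommGroup H] [InnerProductSpace ℝ H] {n : ℕ}
    (z : Fin n → H) (C : ℝ) (hC : 0 < C) (hnorm : ∀ i, ⟪z i, z i⟫ = C)
    (I : Finset (Fin n)) (hI : I.Nonempty) (hIc : Iᶜ.Nonempty)
    (ν : ℝ) (hν : ν = Iᶜ.inf' hIc fun j => I.sup' hI fun i => ⟪z i, z j⟫)
    (hν0 : 0 ≤ ν)
    (zbar : H) (hzbar : zbar = (n : ℝ)⁻¹ • ∑ i, z i) :
    haveI : FiniteDimensional ℝ (Submodule.span ℝ (z '' ↑I)) :=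
      FiniteDimensional.span_of_finite ℝ ((I.finite_toSet).image z)
    ‖zbar - (Submodule.orthogonalProjectionOnto (Submodule.span ℝ (z '' ↑I)) zbar : H)‖ ≤
      (1 - (I.card : ℝ) / n) * Real.sqrt ((C ^ 2 - ν ^ 2) / C) := by
  haveI : FiniteDimensional ℝ (Submodule.span ℝ (z '' ↑I)) :=
    FiniteDimensional.span_of_finite ℝ ((I.finite_toSet).image z)
  set S := Submodule.span ℝ (z '' ↑I) with hS
  have hn : 0 < n := Fin.pos_iff_nonempty.mpr ⟨hI.choose⟩
  have hnR : (0:ℝ) < n := by exact_mod_cast hn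
  set B := Real.sqrt ((C ^ 2 - ν ^ 2) / C) with hB
  have hB0 : 0 ≤ B := Real.sqrt_nonneg _
  -- choose maximizers
  choose g hgI hgval using
    fun j : Fin n => Finset.exists_mem_eq_sup' hI (fun i => ⟪z i, z j⟫)
  have hmem : ∀ i ∈ I, z i ∈ S := fun i hi => Submodule.subset_span ⟨i, hi, rfl⟩
  set c : Fin n → ℝ := fun j => ⟪z (g j), z j⟫ / C with hc
  set v : H := (n : ℝ)⁻¹ • (∑ i ∈ I, z i + ∑ j ∈ Iᶜ, c j • z (g j)) with hv
  have hvS : v ∈ S := by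
    refine Submodule.smul_mem _ _ (Submodule.add_mem _ ?_ ?_)
    · exact Submodule.sum_mem _ fun i hi => hmem i hi
    · exact Submodule.sum_mem _ fun j _ => Submodule.smul_mem _ _ (hmem _ (hgI j))
  -- key per-term bound
  have hterm : ∀ j ∈ Iᶜ, ‖z j - c j • z (g j)‖ ≤ B := by
    intro j hj
    set μ : ℝ := ⟪z (g j), z j⟫ with hμ
    have hνμ : ν ≤ μ := by
      rw [hν]
      calc Iᶜ.inf' hIc (fun j => I.sup' hI fun i => ⟪z i, z j⟫)
          ≤ I.sup' hI fun i => ⟪z i, z j⟫ := Finset.inf'_le _ hj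
        _ = μ := hgval j
    have hsq : ‖z j - c j • z (g j)‖ ^ 2 = (C ^ 2 - μ ^ 2) / C := by
      have h1 : ‖z j‖ ^ 2 = C := by rw [← real_inner_self_eq_norm_sq]; exact hnorm j
      have h2 : ‖z (g j)‖ ^ 2 = C := by rw [← real_inner_self_eq_norm_sq]; exact hnorm _
      rw [norm_sub_sq_real, real_inner_smul_right, norm_smul, mul_pow, h1, h2,
        real_inner_comm]
      simp only [← hμ, hc, Real.norm_eq_abs, sq_abs]
      field_simp
      ring
    have hnn : 0 ≤ (C ^ 2 - μ ^ 2) / C := hsq ▸ sq_nonneg _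
    have : ‖z j - c j • z (g j)‖ = Real.sqrt ((C ^ 2 - μ ^ 2) / C) := by
      rw [← hsq, Real.sqrt_sq (norm_nonneg _)]
    rw [this, hB]
    apply Real.sqrt_le_sqrt
    have : ν ^ 2 ≤ μ ^ 2 := pow_le_pow_left₀ hν0 hνμ 2
    gcongr
  -- rewrite zbar - v
  have hdiff : zbar - v = (n : ℝ)⁻¹ • ∑ j ∈ Iᶜ, (z j - c j • z (g j)) := by
    rw [hzbar, hv, ← smul_sub]
    congr 1
    rw [← Finset.sum_add_sum_compl I z, Finset.sum_sub_distrib]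
    abel
  have hbound : ‖zbar - v‖ ≤ (1 - (I.card : ℝ) / n) * B := by
    rw [hdiff, norm_smul]
    have h1 : ‖∑ j ∈ Iᶜ, (z j - c j • z (g j))‖ ≤ (Iᶜ.card : ℝ) * B := by
      calc ‖∑ j ∈ Iᶜ, (z j - c j • z (g j))‖
          ≤ ∑ j ∈ Iᶜ, ‖z j - c j • z (g j)‖ := norm_sum_le _ _
        _ ≤ ∑ _j ∈ Iᶜ, B := Finset.sum_le_sum hterm
        _ = (Iᶜ.card : ℝ) * B := by rw [Finset.sum_const, nsmul_eq_mul]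
    have h2 : ‖((n : ℝ)⁻¹)‖ = (n : ℝ)⁻¹ := by
      rw [Real.norm_eq_abs, abs_of_nonneg (by positivity)]
    rw [h2]
    have hcard : (Iᶜ.card : ℝ) = n - I.card := by
      rw [Finset.card_compl, Fintype.card_fin]
      have := I.card_le_univ
      rw [Fintype.card_fin] at this
      push_cast [Nat.cast_sub this]
      ring
    calc (n : ℝ)⁻¹ * ‖∑ j ∈ Iᶜ, (z j - c j • z (g j))‖
        ≤ (n : ℝ)⁻¹ * ((Iᶜ.card : ℝ) * B) := by
          apply mul_le_mul_of_nonneg_left h1 (by positivity)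
      _ = (1 - (I.card : ℝ) / n) * B := by rw [hcard]; field_simp
  refine le_trans ?_ hbound
  rw [← Submodule.starProjection_apply, Submodule.starProjection_minimal]
  exact ciInf_le ⟨0, fun x ⟨w, hw⟩ => hw ▸ norm_nonneg _⟩ (⟨v, hvS⟩ : S)
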